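/- arXiv:1111.1543 — 2 statements merged into one kernel-verified Lean document; each statement's English description precedes it below -/
import Mathlib

section
/- Let p be a prime and f, g ∈ F_p[X] polynomials of degrees n and m respectively with m ≥ 1, n ≥ 1 and m not dividing n. Suppose x_1, ..., x_n ∈ F_p are pairwise distinct and nonzero, and y_1, ..., y_n ∈ F_p are arbitrary. Then the number of pairs (x, y) ∈ F_p × F_p satisfying f(x) = g(y) together with the vanishing of the (n+1)×(n+1) determinant whose first row is (x^n, x^{n−1}, ..., x, y) and whose remaining rows are (x_i^n, x_i^{n−1}, ..., x_i, y_i) for i = 1, ..., n, is at most m·n. -/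
theorem stmt_1 (p : ℕ) (hp : p.Prime) (n m : ℕ) (hn : 1 ≤ n) (hm : 1 ≤ m)
    (hndvd : ¬ m ∣ n) (f g : Polynomial (ZMod p))
    (hf : f.natDegree = n) (hg : g.natDegree = m)
    (x y : Fin n → ZMod p)
    (hdist : ∀ i j : Fin n, i ≠ j → x i ≠ x j)
    (hnz : ∀ i : Fin n, x i ≠ 0) :
    {ab : ZMod p × ZMod p |
      f.eval ab.1 = g.eval ab.2 ∧
      (Matrix.of fun i j : Fin (n + 1) =>
        if (j : ℕ) = n then
          (if (i : ℕ) = 0 then ab.2 else y ⟨(i : ℕ) - 1, by have := i.isLt; omega⟩)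
        else
          (if (i : ℕ) = 0 then ab.1 else x ⟨(i : ℕ) - 1, by have := i.isLt; omega⟩)
            ^ (n - (j : ℕ))).det = 0}.ncard ≤ m * n := by
  haveI := Fact.mk hp
  classical
  -- the cofactors of the first row (independent of a, b)
  set w : Fin (n + 1) → ZMod p := fun j => (-1 : ZMod p) ^ (j : ℕ) *
    (Matrix.of fun i k : Fin n =>
      if ((j.succAbove k : Fin (n + 1)) : ℕ) = n then y i
      else x i ^ (n - ((j.succAbove k : Fin (n + 1)) : ℕ))).det with hw
  -- Laplace expansion along the first row
  have hdet : ∀ a b : ZMod p,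
      (Matrix.of fun i j : Fin (n + 1) =>
        if (j : ℕ) = n then
          (if (i : ℕ) = 0 then b else y ⟨(i : ℕ) - 1, by have := i.isLt; omega⟩)
        else
          (if (i : ℕ) = 0 then a else x ⟨(i : ℕ) - 1, by have := i.isLt; omega⟩)
            ^ (n - (j : ℕ))).det
      = w (Fin.last n) * b + ∑ j : Fin n, w j.castSucc * a ^ (n - (j : ℕ)) := by
    intro a b
    rw [Matrix.det_succ_row_zero]
    have hterm : ∀ j : Fin (n + 1),
        (-1 : ZMod p) ^ (j : ℕ) *
          (Matrix.of fun i j : Fin (n + 1) =>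
            if (j : ℕ) = n then
              (if (i : ℕ) = 0 then b else y ⟨(i : ℕ) - 1, by have := i.isLt; omega⟩)
            else
              (if (i : ℕ) = 0 then a else x ⟨(i : ℕ) - 1, by have := i.isLt; omega⟩)
                ^ (n - (j : ℕ))) 0 j *
          ((Matrix.of fun i j : Fin (n + 1) =>
            if (j : ℕ) = n then
              (if (i : ℕ) = 0 then b else y ⟨(i : ℕ) - 1, by have := i.isLt; omega⟩)
            else
              (if (i : ℕ) = 0 then a else x ⟨(i : ℕ) - 1, by have := i.isLt; omega⟩)
                ^ (n - (j : ℕ))).submatrix Fin.succ j.succAbove).det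
        = w j * (if (j : ℕ) = n then b else a ^ (n - (j : ℕ))) := by
      intro j
      have h0 : (Matrix.of fun i j : Fin (n + 1) =>
            if (j : ℕ) = n then
              (if (i : ℕ) = 0 then b else y ⟨(i : ℕ) - 1, by have := i.isLt; omega⟩)
            else
              (if (i : ℕ) = 0 then a else x ⟨(i : ℕ) - 1, by have := i.isLt; omega⟩)
                ^ (n - (j : ℕ))) 0 j = if (j : ℕ) = n then b else a ^ (n - (j : ℕ)) := by
        simp [Matrix.of_apply]
      have hs : ((Matrix.of fun i j : Fin (n + 1) =>
            if (j : ℕ) = n then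
              (if (i : ℕ) = 0 then b else y ⟨(i : ℕ) - 1, by have := i.isLt; omega⟩)
            else
              (if (i : ℕ) = 0 then a else x ⟨(i : ℕ) - 1, by have := i.isLt; omega⟩)
                ^ (n - (j : ℕ))).submatrix Fin.succ j.succAbove)
          = Matrix.of fun i k : Fin n =>
              if ((j.succAbove k : Fin (n + 1)) : ℕ) = n then y i
              else x i ^ (n - ((j.succAbove k : Fin (n + 1)) : ℕ)) := by
        ext i k
        simp only [Matrix.submatrix_apply, Matrix.of_apply, Fin.val_succ]
        split <;> simp
      rw [h0, hs, hw]
      ring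
    calc (∑ j : Fin (n + 1), (-1 : ZMod p) ^ (j : ℕ) * _ * _)
        = ∑ j : Fin (n + 1), w j * (if (j : ℕ) = n then b else a ^ (n - (j : ℕ))) :=
          Finset.sum_congr rfl fun j _ => hterm j
      _ = w (Fin.last n) * b + ∑ j : Fin n, w j.castSucc * a ^ (n - (j : ℕ)) := by
          rw [Fin.sum_univ_castSucc]
          have h1 : ∀ j : Fin n,
              w j.castSucc * (if ((j.castSucc : Fin (n+1)) : ℕ) = n then b
                else a ^ (n - ((j.castSucc : Fin (n+1)) : ℕ)))
              = w j.castSucc * a ^ (n - (j : ℕ)) := by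
            intro j
            rw [if_neg]
            · simp
            · simp only [Fin.coe_castSucc]; exact j.isLt.ne
          rw [Finset.sum_congr rfl fun j _ => h1 j]
          simp [add_comm]
  -- the key cofactor is nonzero
  have hc : w (Fin.last n) ≠ 0 := by
    have hsub : (Matrix.of fun i k : Fin n =>
        if (((Fin.last n).succAbove k : Fin (n + 1)) : ℕ) = n then y i
        else x i ^ (n - (((Fin.last n).succAbove k : Fin (n + 1)) : ℕ)))
        = Matrix.of fun i k : Fin n => x i * x i ^ (n - 1 - (k : ℕ)) := by
      ext i k
      have hk : (((Fin.last n).succAbove k : Fin (n + 1)) : ℕ) = (k : ℕ) := by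
        simp [Fin.succAbove_last]
      simp only [Matrix.of_apply]
      rw [hk, if_neg k.isLt.ne]
      have : n - (k : ℕ) = (n - 1 - (k : ℕ)) + 1 := by have := k.isLt; omega
      rw [this, pow_succ']
    have hvdm : (Matrix.det fun i k : Fin n => x i ^ (n - 1 - (k : ℕ)))
        = ((Equiv.Perm.sign (Fin.revPerm : Equiv.Perm (Fin n)) : ℤ) : ZMod p)
            * (Matrix.vandermonde x).det := by
      have heq : ((Matrix.vandermonde x).submatrix id ⇑(Fin.revPerm))
          = fun i k : Fin n => x i ^ (n - 1 - (k : ℕ)) := by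
        ext i k
        simp only [Matrix.submatrix_apply, Matrix.vandermonde_apply, id,
          Fin.revPerm_apply, Fin.val_rev]
        congr 1
        omega
      rw [← heq, Matrix.det_permute']
    have hvd : (Matrix.vandermonde x).det ≠ 0 := by
      rw [Matrix.det_vandermonde_ne_zero_iff]
      intro i j hij
      by_contra hne
      exact hdist i j hne hij
    have hsign : (((Equiv.Perm.sign (Fin.revPerm : Equiv.Perm (Fin n)) : ℤˣ) : ℤ) : ZMod p) ≠ 0 := by
      rcases Int.units_eq_one_or (Equiv.Perm.sign (Fin.revPerm : Equiv.Perm (Fin n))) with h | h <;>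
        simp [h]
    rw [hw]
    simp only [hsub]
    rw [Matrix.det_mul_column x (fun i k => x i ^ (n - 1 - (k : ℕ))), hvdm]
    refine mul_ne_zero (pow_ne_zero _ ?_) (mul_ne_zero
      (Finset.prod_ne_zero_iff.mpr fun i _ => hnz i) (mul_ne_zero hsign hvd))
    exact neg_ne_zero.mpr one_ne_zero
  -- the interpolation polynomial
  set c : ZMod p := w (Fin.last n) with hcdef
  set Q : Polynomial (ZMod p) := Polynomial.C (-c⁻¹) *
      ∑ j : Fin n, Polynomial.C (w j.castSucc) * Polynomial.X ^ (n - (j : ℕ)) with hQ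
  have hQeval : ∀ a : ZMod p,
      Q.eval a = -c⁻¹ * ∑ j : Fin n, w j.castSucc * a ^ (n - (j : ℕ)) := by
    intro a
    simp [hQ, Polynomial.eval_finset_sum]
  have hQdeg : Q.natDegree ≤ n := by
    refine le_trans (Polynomial.natDegree_C_mul_le _ _) ?_
    refine Polynomial.natDegree_sum_le_of_forall_le _ _ fun j _ => ?_
    refine le_trans (Polynomial.natDegree_C_mul_le _ _) ?_
    simpa using Nat.sub_le n (j : ℕ)
  -- the equation polynomial
  set h : Polynomial (ZMod p) := f - g.comp Q with hh
  have hne : h ≠ 0 := by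
    intro h0
    have : f = g.comp Q := by
      rwa [hh, sub_eq_zero] at h0
    have hdeg : f.natDegree = g.natDegree * Q.natDegree := by
      rw [this, Polynomial.natDegree_comp]
    exact hndvd ⟨Q.natDegree, by rw [← hf, hdeg, hg]⟩
  have hdegh : h.natDegree ≤ m * n := by
    refine le_trans (Polynomial.natDegree_sub_le _ _) (max_le ?_ ?_)
    · rw [hf]; exact Nat.le_mul_of_pos_left n hm
    · rw [Polynomial.natDegree_comp, hg]
      exact Nat.mul_le_mul_left m hQdeg
  -- the solution set injects into the root set of h
  have hsubset : {ab : ZMod p × ZMod p |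
      f.eval ab.1 = g.eval ab.2 ∧
      (Matrix.of fun i j : Fin (n + 1) =>
        if (j : ℕ) = n then
          (if (i : ℕ) = 0 then ab.2 else y ⟨(i : ℕ) - 1, by have := i.isLt; omega⟩)
        else
          (if (i : ℕ) = 0 then ab.1 else x ⟨(i : ℕ) - 1, by have := i.isLt; omega⟩)
            ^ (n - (j : ℕ))).det = 0}
      ⊆ (fun a => (a, Q.eval a)) '' {a : ZMod p | h.eval a = 0} := by
    rintro ⟨a, b⟩ ⟨h1, h2⟩
    rw [hdet a b] at h2
    have hb : b = Q.eval a := by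
      rw [hQeval a]
      have : c * b = -∑ j : Fin n, w j.castSucc * a ^ (n - (j : ℕ)) := by
        rw [hcdef]; linear_combination h2
      field_simp
      linear_combination this
    refine ⟨a, ?_, by simp [hb]⟩
    simp only [Set.mem_setOf_eq, hh, Polynomial.eval_sub, Polynomial.eval_comp, ← hb, h1,
      sub_self]
  -- counting
  have hfin : {a : ZMod p | h.eval a = 0}.Finite := Polynomial.finite_setOf_isRoot hne
  have hroots : {a : ZMod p | h.eval a = 0} = ↑h.roots.toFinset := by
    ext a
    simp [Polynomial.mem_roots, hne, Polynomial.IsRoot]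
  calc _ ≤ ((fun a => (a, Q.eval a)) '' {a : ZMod p | h.eval a = 0}).ncard :=
        Set.ncard_le_ncard hsubset (hfin.image _)
    _ ≤ {a : ZMod p | h.eval a = 0}.ncard := Set.ncard_image_le hfin
    _ = h.roots.toFinset.card := by rw [hroots, Set.ncard_coe_finset]
    _ ≤ Multiset.card h.roots := Multiset.toFinset_card_le _
    _ ≤ h.natDegree := Polynomial.card_roots' h
    _ ≤ m * n := hdegh
end

section
/- Let p be a prime, r, s integers with 1 ≤ |r|, s ≤ p^{1/2} and gcd(r,s) = 1, and c an integer. The number of pairs (x, y) with 1 ≤ x, y ≤ M < p satisfying s·x − r·y ≡ c (mod p) is at most (1 + 2M/max{|r|, s}) · (1 + 2M(s + |r|)/p). -/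
private lemma ediv_eq_imp_eq (d a b : ℤ) (hd : 0 < d) (h1 : d ∣ a - b)
    (h2 : a / d = b / d) : a = b := by
  have hmod : a % d = b % d := by
    rw [Int.emod_eq_emod_iff_emod_sub_eq_zero]
    exact Int.emod_eq_zero_of_dvd h1
  have ha := Int.mul_ediv_add_emod a d
  have hb := Int.mul_ediv_add_emod b d
  rw [h2] at ha
  rw [hmod] at ha
  linarith

set_option maxHeartbeats 1000000 in
theorem stmt_7 (p : ℕ) (hp : p.Prime) (r s c : ℤ) (M : ℕ)
    (hM : 1 ≤ M) (hMp : M < p)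
    (hr : 1 ≤ |r|) (hs : 1 ≤ s)
    (hrb : (|r| : ℝ) ≤ Real.sqrt p) (hsb : (s : ℝ) ≤ Real.sqrt p)
    (hcop : IsCoprime r s) :
    ({xy : ℤ × ℤ | 1 ≤ xy.1 ∧ xy.1 ≤ M ∧ 1 ≤ xy.2 ∧ xy.2 ≤ M ∧
        (p : ℤ) ∣ (s * xy.1 - r * xy.2 - c)}.ncard : ℝ)
      ≤ (1 + 2 * M / max (|r| : ℝ) (s : ℝ)) * (1 + 2 * M * ((s : ℝ) + |r|) / p) := by
  have hp0 : (0:ℤ) < (p:ℤ) := by exact_mod_cast hp.pos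
  have hr0 : r ≠ 0 := by
    intro h; rw [h, abs_zero] at hr; omega
  have hs0 : s ≠ 0 := by omega
  have hM1 : (1:ℤ) ≤ (M:ℤ) := by exact_mod_cast hM
  set S : Set (ℤ × ℤ) := {xy : ℤ × ℤ | 1 ≤ xy.1 ∧ xy.1 ≤ M ∧ 1 ≤ xy.2 ∧ xy.2 ≤ M ∧
        (p : ℤ) ∣ (s * xy.1 - r * xy.2 - c)} with hS
  set m : ℤ := max |r| s with hm
  have hm0 : (0:ℤ) < m := lt_of_lt_of_le hs (le_max_right _ _)
  set A : ℤ := -((s + |r|) * (M:ℤ)) - c with hA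
  set B : ℤ := (s + |r|) * (M:ℤ) - c with hB
  set zlo : ℤ := -((-A) / (p:ℤ)) with hzlo
  set zhi : ℤ := B / (p:ℤ) with hzhi
  set K : ℤ := ((M:ℤ) - 1) / m with hK
  set T : Finset (ℤ × ℤ) := Finset.Icc zlo zhi ×ˢ Finset.Icc (0:ℤ) K with hT
  set f : ℤ × ℤ → ℤ × ℤ := fun xy =>
    ((s * xy.1 - r * xy.2 - c) / (p:ℤ),
     if s ≤ |r| then (xy.1 - 1) / |r| else (xy.2 - 1) / s) with hf
  -- basic bounds for members
  have key : ∀ xy : ℤ × ℤ, xy ∈ S →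
      A ≤ (s * xy.1 - r * xy.2 - c) ∧ (s * xy.1 - r * xy.2 - c) ≤ B := by
    rintro ⟨x, y⟩ ⟨hx1, hxM, hy1, hyM, _⟩
    have hry : |r * y| ≤ |r| * (M:ℤ) := by
      rw [abs_mul]
      exact mul_le_mul_of_nonneg_left (abs_le.mpr ⟨by linarith, hyM⟩) (abs_nonneg r)
    have hry' := abs_le.mp hry
    have hsx1 : s * x ≤ s * (M:ℤ) := mul_le_mul_of_nonneg_left hxM (by linarith)
    have hsx2 : s * 1 ≤ s * x := mul_le_mul_of_nonneg_left hx1 (by linarith)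
    constructor
    · simp only [hA]; nlinarith
    · simp only [hB]; nlinarith
  have hmaps : ∀ xy ∈ S, f xy ∈ (T : Set (ℤ × ℤ)) := by
    rintro ⟨x, y⟩ hxy
    obtain ⟨hx1, hxM, hy1, hyM, hdvd⟩ := hxy
    obtain ⟨hlow, hhigh⟩ := key ⟨x, y⟩ (by exact ⟨hx1, hxM, hy1, hyM, hdvd⟩)
    have hzmul : (s * x - r * y - c) / (p:ℤ) * (p:ℤ) = s * x - r * y - c :=
      Int.ediv_mul_cancel hdvd
    simp only [hT, Finset.coe_product, Set.mem_prod, Finset.mem_coe, Finset.mem_Icc, hf]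
    refine ⟨⟨?_, ?_⟩, ?_, ?_⟩
    · -- zlo ≤ z
      rw [hzlo, neg_le]
      rw [Int.le_ediv_iff_mul_le hp0]
      nlinarith [hzmul]
    · rw [hzhi]
      rw [Int.le_ediv_iff_mul_le hp0]
      linarith [hzmul]
    · split_ifs with h
      · exact Int.ediv_nonneg (by linarith) (by linarith)
      · exact Int.ediv_nonneg (by linarith) (by linarith)
    · split_ifs with h
      · have hmr : m = |r| := max_eq_left h
        rw [hK, hmr]
        exact Int.ediv_le_ediv (by linarith) (by linarith)
      · have hms : m = s := max_eq_right (by linarith)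
        rw [hK, hms]
        exact Int.ediv_le_ediv (by linarith) (by linarith)
  have hinj : Set.InjOn f S := by
    rintro ⟨x, y⟩ hxy ⟨x', y'⟩ hxy' heq
    obtain ⟨hx1, hxM, hy1, hyM, hdvd⟩ := hxy
    obtain ⟨hx1', hxM', hy1', hyM', hdvd'⟩ := hxy'
    have hzmul : (s * x - r * y - c) / (p:ℤ) * (p:ℤ) = s * x - r * y - c :=
      Int.ediv_mul_cancel hdvd
    have hzmul' : (s * x' - r * y' - c) / (p:ℤ) * (p:ℤ) = s * x' - r * y' - c :=
      Int.ediv_mul_cancel hdvd'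
    have h1 : (s * x - r * y - c) / (p:ℤ) = (s * x' - r * y' - c) / (p:ℤ) :=
      congrArg Prod.fst heq
    have h2 := congrArg Prod.snd heq
    simp only [hf] at h2
    have hmain : s * (x - x') = r * (y - y') := by
      rw [h1] at hzmul
      nlinarith [hzmul, hzmul']
    by_cases h : s ≤ |r|
    · simp only [if_pos h] at h2
      have hrdvd : r ∣ x - x' := by
        apply hcop.dvd_of_dvd_mul_left
        exact ⟨y - y', by linarith⟩
      have habs : |r| ∣ (x - 1) - (x' - 1) := by
        rw [abs_dvd]
        have : (x - 1) - (x' - 1) = x - x' := by ring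
        rw [this]; exact hrdvd
      have hx : x - 1 = x' - 1 := ediv_eq_imp_eq |r| _ _ (by linarith) habs h2
      have hxx : x = x' := by linarith
      have : r * (y - y') = 0 := by rw [← hmain, hxx]; ring
      have : y - y' = 0 := by
        rcases mul_eq_zero.mp this with h' | h'
        · exact absurd h' hr0
        · exact h'
      have : y = y' := by linarith
      simp [hxx, this]
    · simp only [if_neg h] at h2
      have hsdvd : s ∣ y - y' := by
        apply hcop.symm.dvd_of_dvd_mul_left
        exact ⟨x - x', by linarith⟩
      have habs : s ∣ (y - 1) - (y' - 1) := by
        have : (y - 1) - (y' - 1) = y - y' := by ring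
        rw [this]; exact hsdvd
      have hy : y - 1 = y' - 1 := ediv_eq_imp_eq s _ _ (by linarith) habs h2
      have hyy : y = y' := by linarith
      have : s * (x - x') = 0 := by rw [hmain, hyy]; ring
      have : x - x' = 0 := by
        rcases mul_eq_zero.mp this with h' | h'
        · exact absurd h' hs0
        · exact h'
      have : x = x' := by linarith
      simp [hyy, this]
  -- count
  have hcard : (S.ncard : ℝ) ≤ (T.card : ℝ) := by
    have h1 : (f '' S).ncard = S.ncard := Set.ncard_image_of_injOn hinj
    have h2 : f '' S ⊆ (T : Set (ℤ × ℤ)) := by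
      rintro _ ⟨xy, hxy, rfl⟩; exact hmaps xy hxy
    have h3 := Set.ncard_le_ncard h2 T.finite_toSet
    rw [Set.ncard_coe_finset] at h3
    rw [← h1]
    exact_mod_cast h3
  refine le_trans hcard ?_
  -- card computation
  have hTcard : T.card = (zhi + 1 - zlo).toNat * (K + 1 - 0).toNat := by
    rw [hT, Finset.card_product, Int.card_Icc, Int.card_Icc]
  -- real bounds
  have hmR : ((m:ℤ):ℝ) = max (|r| : ℝ) (s : ℝ) := by
    rw [hm]; push_cast; ring_nf
  have hmRpos : (0:ℝ) < max (|r| : ℝ) (s : ℝ) := by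
    rw [← hmR]; exact_mod_cast hm0
  have hppos : (0:ℝ) < (p:ℝ) := by exact_mod_cast hp.pos
  have hMR : (0:ℝ) ≤ (M:ℝ) := Nat.cast_nonneg M
  have hrR : (0:ℝ) ≤ (|r| : ℝ) := by positivity
  have hsR : (0:ℝ) < (s : ℝ) := by exact_mod_cast hs
  have hRHS1 : (0:ℝ) ≤ 1 + 2 * M / max (|r| : ℝ) (s : ℝ) := by positivity
  have hRHS2 : (0:ℝ) ≤ 1 + 2 * M * ((s : ℝ) + |r|) / p := by positivity
  -- bound z count
  have hzc : (((zhi + 1 - zlo).toNat : ℤ) : ℝ) ≤ 1 + 2 * M * ((s : ℝ) + |r|) / p := by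
    rcases le_or_gt (zhi + 1 - zlo) 0 with h | h
    · have : (zhi + 1 - zlo).toNat = 0 := Int.toNat_of_nonpos h
      rw [this]; simpa using hRHS2
    · rw [Int.toNat_of_nonneg (le_of_lt h)]
      have hB1 : (p:ℤ) * zhi ≤ B := by
        have h1 := Int.mul_ediv_add_emod B (p:ℤ)
        have h2 := Int.emod_nonneg B (ne_of_gt hp0)
        rw [hzhi]; linarith
      have hA1 : A ≤ (p:ℤ) * zlo := by
        have h1 := Int.mul_ediv_add_emod (-A) (p:ℤ)
        have h2 := Int.emod_nonneg (-A) (ne_of_gt hp0)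
        rw [hzlo]; nlinarith
      have hB1R : (p:ℝ) * ((zhi:ℤ):ℝ) ≤ ((B:ℤ):ℝ) := by exact_mod_cast hB1
      have hA1R : ((A:ℤ):ℝ) ≤ (p:ℝ) * ((zlo:ℤ):ℝ) := by exact_mod_cast hA1
      have hBA : ((B:ℤ):ℝ) - ((A:ℤ):ℝ) = 2 * M * ((s : ℝ) + |r|) := by
        rw [hB, hA]; push_cast; ring
      rw [div_eq_inv_mul, ← hBA]
      have hzz : ((zhi:ℤ):ℝ) - ((zlo:ℤ):ℝ) ≤ (((B:ℤ):ℝ) - ((A:ℤ):ℝ)) / p := by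
        rw [le_div_iff₀ hppos]; nlinarith
      push_cast
      rw [div_eq_inv_mul] at hzz
      linarith
  -- bound t count
  have htc : (((K + 1 - 0).toNat : ℤ) : ℝ) ≤ 1 + 2 * M / max (|r| : ℝ) (s : ℝ) := by
    have hK0 : 0 ≤ K := Int.ediv_nonneg (by linarith) (le_of_lt hm0)
    rw [show K + 1 - 0 = K + 1 by ring, Int.toNat_of_nonneg (by linarith)]
    have hKm : m * K ≤ (M:ℤ) - 1 := by
      have h1 := Int.mul_ediv_add_emod ((M:ℤ) - 1) m
      have h2 := Int.emod_nonneg ((M:ℤ) - 1) (ne_of_gt hm0)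
      rw [hK]; linarith
    have hKmR : ((m:ℤ):ℝ) * ((K:ℤ):ℝ) ≤ (M:ℝ) - 1 := by exact_mod_cast hKm
    rw [hmR] at hKmR
    have : ((K:ℤ):ℝ) ≤ 2 * M / max (|r| : ℝ) (s : ℝ) := by
      rw [le_div_iff₀ hmRpos]; nlinarith
    push_cast
    linarith
  rw [hTcard]
  push_cast at hzc htc ⊢
  calc (((zhi + 1 - zlo).toNat : ℝ)) * (((K + 1 - 0).toNat : ℝ))
      ≤ (1 + 2 * M * ((s : ℝ) + |(r:ℝ)|) / p) * (1 + 2 * M / max (|(r:ℝ)|) ((s:ℝ))) := by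
        apply mul_le_mul ?_ ?_ (Nat.cast_nonneg _) ?_
        · convert hzc using 2 <;> push_cast <;> ring
        · convert htc using 2 <;> push_cast <;> ring
        · positivity
    _ = (1 + 2 * M / max (|(r:ℝ)|) ((s:ℝ))) * (1 + 2 * M * ((s : ℝ) + |(r:ℝ)|) / p) := by
        ring
end
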